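/- arXiv:2303.13734 — 2 statements merged into one kernel-verified Lean document; each statement's English description precedes it below -/
import Mathlib

section
/- Let G ≤ S₂^k ≤ S_{2k} be a subdirect product of k copies of S₂ (i.e., G projects onto each factor), where the i-th factor S₂ acts on {2i−1, 2i}. Let φ : S₂^k → (ℤ/2ℤ)^k be the isomorphism sending the transposition (2i−1, 2i) to the standard basis vector e_i, and let C := φ(G) be the corresponding binary linear code. Let A ≤ S_k be the permutation automorphism group of the code C (permutations of coordinates preserving C). Then the normaliser of G in S_{2k} equals the semidirect product S₂^k ⋊ A, i.e., the group generated by S₂^k and the coordinate permutations in A (acting on {1,…,2k} by permuting the k pairs {2i−1,2i}). -/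
open Equiv

namespace Stmt15

variable {k : ℕ}

abbrev PP (g : Perm (Fin k × Fin 2)) : Prop := ∀ p : Fin k × Fin 2, (g p).1 = p.1

lemma fin2_cases (s : Fin 2) : s = 0 ∨ s = 1 := by omega

lemma fin2_ne (a b : Fin 2) (h : a ≠ b) (c : Fin 2) : c = a ∨ c = b := by omega

lemma pair_ne (i : Fin k) : ((i, 0) : Fin k × Fin 2) ≠ (i, 1) := fun he => by
  have h2 : (0 : Fin 2) = 1 := congrArg Prod.snd he
  exact absurd h2 (by decide)

lemma pp_cases {g : Perm (Fin k × Fin 2)} (hg : PP g) (i : Fin k) :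
    g (i, 0) = (i, 0) ∨ g (i, 0) = (i, 1) := by
  have h1 := hg (i, 0)
  rcases fin2_cases ((g (i, 0)).2) with h2 | h2
  · exact Or.inl (Prod.ext_iff.mpr ⟨h1, h2⟩)
  · exact Or.inr (Prod.ext_iff.mpr ⟨h1, h2⟩)

lemma pp_swap {g : Perm (Fin k × Fin 2)} (hg : PP g) {i : Fin k}
    (h : g (i, 0) = (i, 1)) : g (i, 1) = (i, 0) := by
  have h1 := hg (i, 1)
  have hne : g (i, 1) ≠ g (i, 0) := fun he => by
    have h2 : (1 : Fin 2) = 0 := congrArg Prod.snd (g.injective he)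
    exact absurd h2 (by decide)
  rcases fin2_cases ((g (i, 1)).2) with h2 | h2
  · exact Prod.ext_iff.mpr ⟨h1, h2⟩
  · exact absurd ((Prod.ext_iff.mpr ⟨h1, h2⟩ : g (i,1) = (i,1)).trans h.symm) hne

lemma pp_fix {g : Perm (Fin k × Fin 2)} (hg : PP g) {i : Fin k}
    (h : g (i, 0) = (i, 0)) : g (i, 1) = (i, 1) := by
  have h1 := hg (i, 1)
  have hne : g (i, 1) ≠ g (i, 0) := fun he => by
    have h2 : (1 : Fin 2) = 0 := congrArg Prod.snd (g.injective he)
    exact absurd h2 (by decide)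
  rcases fin2_cases ((g (i, 1)).2) with h2 | h2
  · exact absurd ((Prod.ext_iff.mpr ⟨h1, h2⟩ : g (i,1) = (i,0)).trans h.symm) hne
  · exact Prod.ext_iff.mpr ⟨h1, h2⟩

lemma fix_iff {g : Perm (Fin k × Fin 2)} (hg : PP g) (i : Fin k) (x : Fin 2) :
    g (i, x) = (i, x) ↔ g (i, 0) = (i, 0) := by
  rcases fin2_cases x with rfl | rfl
  · rfl
  · constructor
    · intro h
      rcases pp_cases hg i with h0 | h0
      · exact h0
      · exact absurd ((pp_swap hg h0).symm.trans h) (pair_ne i)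
    · exact pp_fix hg

lemma swap_iff_ne {g : Perm (Fin k × Fin 2)} (hg : PP g) (i : Fin k) :
    g (i, 0) = (i, 1) ↔ g (i, 0) ≠ (i, 0) := by
  constructor
  · intro h he
    exact pair_ne i (he.symm.trans h)
  · intro h
    rcases pp_cases hg i with h0 | h0
    · exact absurd h0 h
    · exact h0

lemma extA {g h : Perm (Fin k × Fin 2)} (hg : PP g) (hh : PP h)
    (hiff : ∀ i, g (i, 0) = (i, 1) ↔ h (i, 0) = (i, 1)) : g = h := by
  apply Equiv.ext
  rintro ⟨i, x⟩
  rcases pp_cases hg i with h0 | h0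
  · have hh0 : h (i, 0) = (i, 0) := by
      rcases pp_cases hh i with h1 | h1
      · exact h1
      · exact absurd (h0.symm.trans ((hiff i).mpr h1)) (pair_ne i)
    rcases fin2_cases x with rfl | rfl
    · rw [h0, hh0]
    · rw [pp_fix hg h0, pp_fix hh hh0]
  · have hh0 : h (i, 0) = (i, 1) := (hiff i).mp h0
    rcases fin2_cases x with rfl | rfl
    · rw [h0, hh0]
    · rw [pp_swap hg h0, pp_swap hh hh0]

lemma hinvττ {σ : Perm (Fin k × Fin 2)} {τ : Perm (Fin k)}
    (hστ : ∀ p, (σ p).1 = τ p.1) : ∀ p, (σ⁻¹ p).1 = τ⁻¹ p.1 := by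
  intro p
  have h := hστ (σ⁻¹ p)
  rw [show σ (σ⁻¹ p) = p from σ.apply_symm_apply p] at h
  rw [h]; simp

lemma conjC {σ g : Perm (Fin k × Fin 2)} {τ : Perm (Fin k)}
    (hστ : ∀ p, (σ p).1 = τ p.1) (hg : PP g) :
    PP (σ * g * σ⁻¹) ∧
      ∀ j, ((σ * g * σ⁻¹) (j, 0) = (j, 1) ↔ g (τ⁻¹ j, 0) = (τ⁻¹ j, 1)) := by
  have hinvστ := hinvττ hστ
  have hmul : ∀ p : Fin k × Fin 2, (σ * g * σ⁻¹) p = σ (g (σ⁻¹ p)) :=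
    fun p => rfl
  have hpp : PP (σ * g * σ⁻¹) := by
    intro p
    rw [hmul, hστ, hg, hinvστ]
    simp
  refine ⟨hpp, fun j => ?_⟩
  rw [swap_iff_ne hpp, swap_iff_ne hg]
  have fix : (σ * g * σ⁻¹) (j, 0) = (j, 0) ↔
      g (σ⁻¹ ((j, 0) : Fin k × Fin 2)) = σ⁻¹ ((j, 0) : Fin k × Fin 2) := by
    rw [hmul]
    constructor
    · intro h
      have := congrArg (⇑σ⁻¹) h
      simpa using this
    · intro h
      rw [h]; simp
  have hq : σ⁻¹ ((j, 0) : Fin k × Fin 2) =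
      (τ⁻¹ j, (σ⁻¹ ((j, 0) : Fin k × Fin 2)).2) :=
    Prod.ext_iff.mpr ⟨hinvστ (j, 0), rfl⟩
  refine not_congr (fix.trans ?_)
  rw [hq]
  exact fix_iff hg _ _

lemma ite_iff {p q : Prop} [Decidable p] [Decidable q]
    (h : (if p then (1 : ZMod 2) else 0) = (if q then 1 else 0)) : p ↔ q := by
  constructor
  · intro hp; by_contra hq; rw [if_pos hp, if_neg hq] at h; exact one_ne_zero h
  · intro hq; by_contra hp; rw [if_neg hp, if_pos hq] at h
    exact one_ne_zero h.symm

lemma pres_inv {α : Type*} [Finite α] (C : Set (α → ZMod 2)) (τ : Equiv.Perm α)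
    (h : ∀ v ∈ C, v ∘ ⇑τ ∈ C) : ∀ v ∈ C, v ∘ ⇑τ⁻¹ ∈ C := by
  have hpow : ∀ n, ∀ v ∈ C, v ∘ ⇑(τ ^ n) ∈ C := by
    intro n
    induction n with
    | zero => intro v hv; simpa using hv
    | succ n ih =>
      intro v hv
      have he : v ∘ ⇑(τ ^ (n + 1)) = (v ∘ ⇑(τ ^ n)) ∘ ⇑τ := by
        rw [pow_succ]; rfl
      rw [he]; exact h _ (ih v hv)
  intro v hv
  have h1 : τ ^ (orderOf τ - 1) * τ = 1 := by
    rw [← pow_succ, Nat.sub_add_cancel (orderOf_pos τ)]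
    exact pow_orderOf_eq_one τ
  have h2 : τ⁻¹ = τ ^ (orderOf τ - 1) := inv_eq_of_mul_eq_one_left h1
  rw [h2]
  exact hpow _ v hv

lemma conj_mem (G : Subgroup (Perm (Fin k × Fin 2)))
    (hGP : ∀ g ∈ G, PP g)
    (C : Set (Fin k → ZMod 2))
    (hC : ∀ v : Fin k → ZMod 2,
      v ∈ C ↔ ∃ g ∈ G, ∀ i : Fin k, v i = if g (i, 0) = (i, 1) then 1 else 0)
    (σ : Perm (Fin k × Fin 2)) (τ : Perm (Fin k))
    (hστ : ∀ p, (σ p).1 = τ p.1)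
    (hpres : ∀ v ∈ C, v ∘ ⇑τ⁻¹ ∈ C)
    (g : Perm (Fin k × Fin 2)) (hg : g ∈ G) : σ * g * σ⁻¹ ∈ G := by
  have hgP := hGP g hg
  have hv : (fun i => if g (i, 0) = (i, 1) then (1 : ZMod 2) else 0) ∈ C :=
    (hC _).mpr ⟨g, hg, fun i => rfl⟩
  obtain ⟨g', hg', hgv⟩ := (hC _).mp (hpres _ hv)
  obtain ⟨hpp, hiff⟩ := conjC hστ hgP
  have hge : g' = σ * g * σ⁻¹ := by
    refine extA (hGP g' hg') hpp (fun i => ?_)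
    have hi : (if g (τ⁻¹ i, 0) = (τ⁻¹ i, 1) then (1 : ZMod 2) else 0) =
        if g' (i, 0) = (i, 1) then 1 else 0 := hgv i
    exact (ite_iff hi).symm.trans (hiff i).symm
  exact hge ▸ hg'

end Stmt15


/-- Let `G ≤ S₂^k ≤ S_{2k}` be a subdirect product of `k` copies of `S₂`, the
`i`-th copy acting on the pair `{(i,0),(i,1)}` (we realise `{1,…,2k}` as
`Fin k × Fin 2`, and `S₂^k` as the permutations fixing the first coordinate).
Let `C ⊆ (ℤ/2ℤ)^k` be the binary linear code corresponding to `G` under the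
isomorphism sending the `i`-th transposition to the standard vector `e_i`, and
let `A ≤ S_k` be the permutation automorphism group of `C`.  Then the symmetric
normaliser of `G` is exactly `S₂^k ⋊ A`: it consists of the products `g₀ · τ`
with `g₀ ∈ S₂^k` and `τ ∈ A` acting by permuting the `k` pairs. -/
theorem stmt_15 (k : ℕ) (G : Subgroup (Equiv.Perm (Fin k × Fin 2)))
    (hGP : ∀ g ∈ G, ∀ p : Fin k × Fin 2, (g p).1 = p.1)
    (hsub : ∀ i : Fin k, ∃ g ∈ G, g (i, 0) = (i, 1))
    (C : Set (Fin k → ZMod 2))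
    (hC : ∀ v : Fin k → ZMod 2,
      v ∈ C ↔ ∃ g ∈ G, ∀ i : Fin k, v i = if g (i, 0) = (i, 1) then 1 else 0) :
    ∀ σ : Equiv.Perm (Fin k × Fin 2),
      σ ∈ Subgroup.normalizer (G : Set (Equiv.Perm (Fin k × Fin 2))) ↔
      ∃ (g₀ : Equiv.Perm (Fin k × Fin 2)) (τ : Equiv.Perm (Fin k)),
        (∀ p : Fin k × Fin 2, (g₀ p).1 = p.1) ∧
        (∀ v ∈ C, v ∘ ⇑τ ∈ C) ∧
        σ = g₀ * Equiv.prodCongr τ (Equiv.refl (Fin 2)) := by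
  intro σ
  constructor
  · -- forward
    intro hσ
    have hσinv : σ⁻¹ ∈ Subgroup.normalizer (G : Set (Equiv.Perm (Fin k × Fin 2))) := inv_mem hσ
    -- the first coordinate map is well defined on pairs
    have hτ1 : ∀ (i : Fin k) (x : Fin 2), (σ (i, x)).1 = (σ (i, 0)).1 := by
      intro i x
      rcases Stmt15.fin2_cases x with rfl | rfl
      · rfl
      · obtain ⟨g, hg, hgi⟩ := hsub i
        have hcg : σ * g * σ⁻¹ ∈ G :=
          (Subgroup.mem_normalizer_iff.mp hσ g).mp hg
        have hpp := hGP _ hcg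
        have he : (σ * g * σ⁻¹) (σ (i, 0)) = σ (i, 1) := by
          have : (σ * g * σ⁻¹) (σ (i, 0)) = σ (g (σ⁻¹ (σ (i, 0)))) := rfl
          rw [this, show σ⁻¹ (σ (i, 0)) = (i, 0) from σ.symm_apply_apply _, hgi]
        have := hpp (σ (i, 0))
        rw [he] at this
        exact this
    have hinj : Function.Injective (fun i : Fin k => (σ (i, 0)).1) := by
      intro i j hij
      simp only at hij
      have hne2 : (σ (i, 0)).2 ≠ (σ (i, 1)).2 := by
        intro he
        have : σ (i, 0) = σ (i, 1) :=
          Prod.ext_iff.mpr ⟨(hτ1 i 1).symm, he⟩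
        exact Stmt15.pair_ne i (σ.injective this)
      rcases Stmt15.fin2_ne _ _ hne2 ((σ (j, 0)).2) with h | h
      · have : σ (j, 0) = σ (i, 0) := Prod.ext_iff.mpr ⟨hij.symm, h⟩
        have := σ.injective this
        exact (congrArg Prod.fst this).symm
      · have : σ (j, 0) = σ (i, 1) :=
          Prod.ext_iff.mpr ⟨hij.symm.trans (hτ1 i 1).symm, h⟩
        have h2 : (0 : Fin 2) = 1 := congrArg Prod.snd (σ.injective this)
        exact absurd h2 (by decide)
    let τ : Equiv.Perm (Fin k) :=
      Equiv.ofBijective _ (Finite.injective_iff_bijective.mp hinj)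
    have hστ : ∀ p : Fin k × Fin 2, (σ p).1 = τ p.1 := by
      rintro ⟨i, x⟩
      exact hτ1 i x
    refine ⟨σ * (Equiv.prodCongr τ (Equiv.refl (Fin 2)))⁻¹, τ, ?_, ?_, ?_⟩
    · intro p
      have : (σ * (Equiv.prodCongr τ (Equiv.refl (Fin 2)))⁻¹) p
          = σ ((Equiv.prodCongr τ (Equiv.refl (Fin 2)))⁻¹ p) := rfl
      have h2 : ((Equiv.prodCongr τ (Equiv.refl (Fin 2)))⁻¹ p).1 = τ⁻¹ p.1 := rfl
      rw [this, hστ, h2]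
      exact τ.apply_symm_apply p.1
    · -- code preservation
      intro v hv
      obtain ⟨g, hg, hgv⟩ := (hC v).mp hv
      have hmem : σ⁻¹ * g * (σ⁻¹)⁻¹ ∈ G :=
        (Subgroup.mem_normalizer_iff.mp hσinv g).mp hg
      obtain ⟨hpp, hiff⟩ := Stmt15.conjC (Stmt15.hinvττ hστ) (hGP g hg)
      simp only [inv_inv] at hiff
      refine (hC _).mpr ⟨σ⁻¹ * g * (σ⁻¹)⁻¹, hmem, fun i => ?_⟩
      show v (τ i) = _
      rw [hgv (τ i)]
      exact (if_congr (hiff i).symm rfl rfl)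
    · exact (inv_mul_cancel_right σ _).symm
  · -- backward
    rintro ⟨g₀, τ, hg₀, hτC, rfl⟩
    set σ := g₀ * Equiv.prodCongr τ (Equiv.refl (Fin 2)) with hσdef
    have hστ : ∀ p : Fin k × Fin 2, (σ p).1 = τ p.1 := by
      intro p
      have : σ p = g₀ (Equiv.prodCongr τ (Equiv.refl (Fin 2)) p) := rfl
      rw [this, hg₀]
      rcases p with ⟨i, x⟩
      rfl
    have hpres : ∀ v ∈ C, v ∘ ⇑τ⁻¹ ∈ C := Stmt15.pres_inv C τ hτC
    have hpres' : ∀ v ∈ C, v ∘ ⇑(τ⁻¹)⁻¹ ∈ C := by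
      intro v hv; rw [inv_inv]; exact hτC v hv
    rw [Subgroup.mem_normalizer_iff]
    intro h
    constructor
    · intro hh
      exact Stmt15.conj_mem G hGP C hC σ τ hστ hpres h hh
    · intro hh
      have := Stmt15.conj_mem G hGP C hC σ⁻¹ τ⁻¹ (Stmt15.hinvττ hστ)
        hpres' _ hh
      have he : σ⁻¹ * (σ * h * σ⁻¹) * (σ⁻¹)⁻¹ = h := by group
      rwa [he] at this
end

section
/- Let G₁,…,G_m be pairwise non-permutation-isomorphic transitive permutation groups of degrees d₁,…,d_m, and let U ≤ G₁^{e₁} × ⋯ × G_m^{e_m} act on the disjoint union of the domains (so U has orbits contained in the e₁+⋯+e_m domain pieces, and the projection to each factor is surjective, i.e., U is a subdirect product). Then the normaliser of U in the symmetric group on the full domain is contained in (N_{S_{d₁}}(G₁) ≀ S_{e₁}) × ⋯ × (N_{S_{d_m}}(G_m) ≀ S_{e_m}). -/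
private lemma aux1 {m : ℕ} {d e : Fin m → ℕ}
    {G : ∀ i : Fin m, Subgroup (Equiv.Perm (Fin (d i)))}
    (htrans : ∀ i, MulAction.IsPretransitive (G i) (Fin (d i)))
    {U : Subgroup (Equiv.Perm (Σ i : Fin m, Fin (e i) × Fin (d i)))}
    (hUle : ∀ u ∈ U, ∀ (i : Fin m) (c : Fin (e i)),
      ∃ π ∈ G i, ∀ x : Fin (d i), u ⟨i, (c, x)⟩ = ⟨i, (c, π x)⟩)
    (hsub : ∀ (i : Fin m) (c : Fin (e i)), ∀ π ∈ G i,
      ∃ u ∈ U, ∀ x : Fin (d i), u ⟨i, (c, x)⟩ = ⟨i, (c, π x)⟩)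
    {σ : Equiv.Perm (Σ i : Fin m, Fin (e i) × Fin (d i))}
    (hσ : σ ∈ Subgroup.normalizer (U : Set (Equiv.Perm (Σ i : Fin m, Fin (e i) × Fin (d i))))) {i : Fin m} {c : Fin (e i)} {x₀ : Fin (d i)}
    {j : Fin m} {c' : Fin (e j)} {y₀ : Fin (d j)}
    (h0 : σ ⟨i, (c, x₀)⟩ = ⟨j, (c', y₀)⟩) :
    ∀ x : Fin (d i), ∃ y : Fin (d j), σ ⟨i, (c, x)⟩ = ⟨j, (c', y)⟩ := by
  intro x
  obtain ⟨⟨π, hπ⟩, hπx⟩ := (htrans i).exists_smul_eq x₀ x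
  have hπx' : π x₀ = x := hπx
  obtain ⟨u, hu, huact⟩ := hsub i c π hπ
  have hvU : σ * u * σ⁻¹ ∈ U := (Subgroup.mem_normalizer_iff.mp hσ u).mp hu
  obtain ⟨π', hπ', hv⟩ := hUle _ hvU j c'
  refine ⟨π' y₀, ?_⟩
  calc σ ⟨i, (c, x)⟩ = σ (u ⟨i, (c, x₀)⟩) := by rw [huact x₀, hπx']
    _ = (σ * u * σ⁻¹) (σ ⟨i, (c, x₀)⟩) := by
        simp [Equiv.Perm.mul_apply]
    _ = ⟨j, (c', π' y₀)⟩ := by rw [h0, hv y₀]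

private lemma aux2 {m : ℕ} {d e : Fin m → ℕ}
    {G : ∀ i : Fin m, Subgroup (Equiv.Perm (Fin (d i)))}
    {U : Subgroup (Equiv.Perm (Σ i : Fin m, Fin (e i) × Fin (d i)))}
    (hUle : ∀ u ∈ U, ∀ (i : Fin m) (c : Fin (e i)),
      ∃ π ∈ G i, ∀ x : Fin (d i), u ⟨i, (c, x)⟩ = ⟨i, (c, π x)⟩)
    (hsub : ∀ (i : Fin m) (c : Fin (e i)), ∀ π ∈ G i,
      ∃ u ∈ U, ∀ x : Fin (d i), u ⟨i, (c, x)⟩ = ⟨i, (c, π x)⟩)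
    {σ : Equiv.Perm (Σ i : Fin m, Fin (e i) × Fin (d i))}
    (hσ : σ ∈ Subgroup.normalizer (U : Set (Equiv.Perm (Σ i : Fin m, Fin (e i) × Fin (d i))))) {i : Fin m} {c : Fin (e i)}
    {j : Fin m} {c' : Fin (e j)} {g : Fin (d i) → Fin (d j)}
    (hg : ∀ x : Fin (d i), σ ⟨i, (c, x)⟩ = ⟨j, (c', g x)⟩)
    {π : Equiv.Perm (Fin (d i))} (hπ : π ∈ G i) :
    ∃ π' ∈ G j, ∀ x : Fin (d i), g (π x) = π' (g x) := by
  obtain ⟨u, hu, huact⟩ := hsub i c π hπ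
  have hvU : σ * u * σ⁻¹ ∈ U := (Subgroup.mem_normalizer_iff.mp hσ u).mp hu
  obtain ⟨π', hπ', hv⟩ := hUle _ hvU j c'
  refine ⟨π', hπ', fun x => ?_⟩
  have h1 : σ ⟨i, (c, π x)⟩ = ⟨j, (c', π' (g x))⟩ := by
    calc σ ⟨i, (c, π x)⟩ = σ (u ⟨i, (c, x)⟩) := by rw [huact x]
      _ = (σ * u * σ⁻¹) (σ ⟨i, (c, x)⟩) := by
          simp [Equiv.Perm.mul_apply]
      _ = ⟨j, (c', π' (g x))⟩ := by rw [hg x, hv]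
  have h2 := (hg (π x)).symm.trans h1
  simpa using h2

/-- Let `G₁,…,G_m` be pairwise non-permutation-isomorphic transitive groups of
degrees `d₁,…,d_m` and let `U` be a subdirect product of
`G₁^{e₁} × ⋯ × G_m^{e_m}`, acting on the disjoint union
`Ω = Σ i, Fin (e i) × Fin (d i)` of the domains.  Then every element of the
symmetric normaliser of `U` lies in
`(N(G₁) ≀ S_{e₁}) × ⋯ × (N(G_m) ≀ S_{e_m})`: it maps each copy of the domain of
`G_i` onto another copy, via a permutation normalising `G_i`. -/
theorem stmt_16 (m : ℕ) (d e : Fin m → ℕ)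
    (G : ∀ i : Fin m, Subgroup (Equiv.Perm (Fin (d i))))
    (htrans : ∀ i, MulAction.IsPretransitive (G i) (Fin (d i)))
    (hnoniso : ∀ i j : Fin m, i ≠ j →
      ¬ ∃ f : Fin (d i) ≃ Fin (d j),
        ∀ π : Equiv.Perm (Fin (d i)), π ∈ G i ↔ f.permCongr π ∈ G j)
    (U : Subgroup (Equiv.Perm (Σ i : Fin m, Fin (e i) × Fin (d i))))
    (hUle : ∀ u ∈ U, ∀ (i : Fin m) (c : Fin (e i)),
      ∃ π ∈ G i, ∀ x : Fin (d i), u ⟨i, (c, x)⟩ = ⟨i, (c, π x)⟩)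
    (hsub : ∀ (i : Fin m) (c : Fin (e i)), ∀ π ∈ G i,
      ∃ u ∈ U, ∀ x : Fin (d i), u ⟨i, (c, x)⟩ = ⟨i, (c, π x)⟩) :
    ∀ σ ∈ Subgroup.normalizer (U : Set (Equiv.Perm (Σ i : Fin m, Fin (e i) × Fin (d i)))), ∀ (i : Fin m) (c : Fin (e i)),
      ∃ (c' : Fin (e i)) (π : Equiv.Perm (Fin (d i))),
        π ∈ Subgroup.normalizer (G i : Set (Equiv.Perm (Fin (d i)))) ∧ ∀ x : Fin (d i), σ ⟨i, (c, x)⟩ = ⟨i, (c', π x)⟩ := by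
  intro σ hσ i c
  by_cases hdi : Nonempty (Fin (d i))
  · obtain ⟨x₀⟩ := hdi
    rcases h0 : σ ⟨i, (c, x₀)⟩ with ⟨j, c', y₀⟩
    have hσ' : σ⁻¹ ∈ Subgroup.normalizer (U : Set (Equiv.Perm (Σ i : Fin m, Fin (e i) × Fin (d i)))) := inv_mem hσ
    have h0' : σ⁻¹ ⟨j, (c', y₀)⟩ = ⟨i, (c, x₀)⟩ := by
      rw [← h0]; exact σ.symm_apply_apply _
    choose g hg using aux1 htrans hUle hsub hσ h0
    choose g' hg' using aux1 htrans hUle hsub hσ' h0'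
    have hg'g : ∀ x, g' (g x) = x := by
      intro x
      have h := hg' (g x)
      rw [← hg x, show ∀ z, σ⁻¹ (σ z) = z from σ.symm_apply_apply] at h
      simpa using h.symm
    have hgg' : ∀ y, g (g' y) = y := by
      intro y
      have h := hg (g' y)
      rw [← hg' y, show ∀ z, σ (σ⁻¹ z) = z from σ.apply_symm_apply] at h
      simpa using h.symm
    let f : Fin (d i) ≃ Fin (d j) := ⟨g, g', hg'g, hgg'⟩
    have hiff : ∀ π : Equiv.Perm (Fin (d i)), π ∈ G i ↔ f.permCongr π ∈ G j := by
      intro π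
      constructor
      · intro hπ
        obtain ⟨π', hπ', hcomm⟩ := aux2 hUle hsub hσ hg hπ
        have hfp : f.permCongr π = π' := by
          ext y
          have h1 : f.permCongr π y = g (π (g' y)) := rfl
          rw [h1, hcomm, hgg']
        rwa [hfp]
      · intro hπ'
        obtain ⟨ρ, hρ, hcomm⟩ := aux2 hUle hsub hσ' hg' hπ'
        have hpe : π = ρ := by
          ext x
          have h1 := hcomm (g x)
          have h2 : f.permCongr π (g x) = g (π x) := by
            show g (π (g' (g x))) = g (π x)
            rw [hg'g]
          rw [h2, hg'g, hg'g] at h1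
          exact congrArg Fin.val h1
        rwa [hpe]
    have hji : j = i := by
      by_contra hne
      exact hnoniso i j (fun h => hne h.symm) ⟨f, hiff⟩
    subst hji
    refine ⟨c', f, ?_, fun x => hg x⟩
    rw [Subgroup.mem_normalizer_iff]
    intro h
    have hc : f * h * f⁻¹ = f.permCongr h := by
      ext x; rfl
    rw [hc]
    exact hiff h
  · exact ⟨c, 1, Subgroup.one_mem _, fun x => (hdi ⟨x⟩).elim⟩
end
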